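/- Consider a commutative 3×3 diagram of finite-dimensional real vector spaces with exact rows (E_A): 0 → A_1 → A_2 → A_3 → 0, (E_B): 0 → B_1 → B_2 → B_3 → 0, (E_C): 0 → C_1 → C_2 → C_3 → 0 and exact columns (E_i): 0 → A_i → B_i → C_i → 0 for i = 1, 2, 3. Choose ordered bases for all nine spaces. Then, with respect to these bases, ν(E_2)/(ν(E_1)·ν(E_3)) = ν(E_B)/(ν(E_A)·ν(E_C)). -/

import Mathlib

/-- The determinant `ν(E)` of a short exact sequence `0 → A →^φ B →^ψ C → 0` of real vector
spaces with respect to bases `bA`, `bB`, `bC`, computed using a linear section `γ` of `ψ`: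
it is `|det θ_γ|` where `θ_γ : A ⊕ C → B`, `(a, c) ↦ φ a + γ c`. -/
noncomputable def nuSES {A B C : Type} [AddCommGroup A] [Module ℝ A]
    [AddCommGroup B] [Module ℝ B] [AddCommGroup C] [Module ℝ C]
    {a b c : ℕ} (h : b = a + c)
    (bB : Module.Basis (Fin b) ℝ B) (bA : Module.Basis (Fin a) ℝ A) (bC : Module.Basis (Fin c) ℝ C)
    (φ : A →ₗ[ℝ] B) (γ : C →ₗ[ℝ] B) : ℝ :=
  |bB.det fun i => Fin.append (fun j => φ (bA j)) (fun j => γ (bC j)) (Fin.cast h i)|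

open LinearMap Matrix Module

/-- index equivalence for a decomposition `b = a + c`. -/
def eFin {a b c : ℕ} (h : b = a + c) : Fin a ⊕ Fin c ≃ Fin b :=
  finSumFinEquiv.trans (finCongr h.symm)

variable {A B C V A' C' : Type} [AddCommGroup A] [Module ℝ A] [AddCommGroup B] [Module ℝ B]
  [AddCommGroup C] [Module ℝ C] [AddCommGroup V] [Module ℝ V]
  [AddCommGroup A'] [Module ℝ A'] [AddCommGroup C'] [Module ℝ C']

/-- the product basis reindexed by `Fin b`. -/
noncomputable def bSum {a b c : ℕ} (h : b = a + c) (bA : Basis (Fin a) ℝ A)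
    (bC : Basis (Fin c) ℝ C) : Basis (Fin b) ℝ (A × C) :=
  (bA.prod bC).reindex (eFin h)

lemma bSum_apply {a b c : ℕ} (h : b = a + c) (bA : Basis (Fin a) ℝ A)
    (bC : Basis (Fin c) ℝ C) (s : Fin a ⊕ Fin c) :
    bSum h bA bC (eFin h s) = Sum.elim (fun j => ((bA j, 0) : A × C)) (fun j => (0, bC j)) s := by
  rw [bSum, Basis.reindex_apply, Equiv.symm_apply_apply]
  cases s <;> simp

lemma bSum_repr {a b c : ℕ} (h : b = a + c) (bA : Basis (Fin a) ℝ A)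
    (bC : Basis (Fin c) ℝ C) (x : A × C) (s : Fin a ⊕ Fin c) :
    (bSum h bA bC).repr x (eFin h s) = Sum.elim (fun j => bA.repr x.1 j) (fun j => bC.repr x.2 j) s := by
  rw [bSum, Basis.repr_reindex_apply, Equiv.symm_apply_apply]
  cases s <;> simp [Basis.prod_repr_inl, Basis.prod_repr_inr]

lemma nu_eq {a b c : ℕ} (h : b = a + c)
    (bB : Basis (Fin b) ℝ B) (bA : Basis (Fin a) ℝ A) (bC : Basis (Fin c) ℝ C)
    (φ : A →ₗ[ℝ] B) (γ : C →ₗ[ℝ] B) :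
    nuSES h bB bA bC φ γ = |(LinearMap.toMatrix (bSum h bA bC) bB (φ.coprod γ)).det| := by
  rw [nuSES, Basis.det_apply]
  congr 2
  ext i j
  rw [Basis.toMatrix_apply, LinearMap.toMatrix_apply]
  congr 1
  obtain ⟨s, rfl⟩ : ∃ s, eFin h s = j := ⟨(eFin h).symm j, Equiv.apply_symm_apply _ _⟩
  rw [bSum_apply]
  have : Fin.cast h (eFin h s) = finSumFinEquiv s := rfl
  rw [this]
  cases s with
  | inl k => simp [Fin.append_left]
  | inr k => simp [Fin.append_right]


lemma toMatrix_prodMap {a b c : ℕ} (h : b = a + c)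
    (bA : Basis (Fin a) ℝ A) (bC : Basis (Fin c) ℝ C)
    (bA' : Basis (Fin a) ℝ A') (bC' : Basis (Fin c) ℝ C')
    (f : A →ₗ[ℝ] A') (g : C →ₗ[ℝ] C') :
    LinearMap.toMatrix (bSum h bA bC) (bSum h bA' bC') (f.prodMap g)
      = Matrix.reindex (eFin h) (eFin h)
          (Matrix.fromBlocks (LinearMap.toMatrix bA bA' f) 0 0 (LinearMap.toMatrix bC bC' g)) := by
  ext i j
  obtain ⟨s, rfl⟩ : ∃ s, eFin h s = i := ⟨(eFin h).symm i, Equiv.apply_symm_apply _ _⟩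
  obtain ⟨t, rfl⟩ : ∃ t, eFin h t = j := ⟨(eFin h).symm j, Equiv.apply_symm_apply _ _⟩
  rw [LinearMap.toMatrix_apply, bSum_apply, bSum_repr]
  simp only [Matrix.reindex_apply, Equiv.symm_apply_apply, Matrix.submatrix_apply]
  cases t with
  | inl k =>
    cases s with
    | inl k' => simp [LinearMap.toMatrix_apply]
    | inr k' => simp
  | inr k =>
    cases s with
    | inl k' => simp
    | inr k' => simp [LinearMap.toMatrix_apply]

lemma det_toMatrix_prodMap {a b c : ℕ} (h : b = a + c)
    (bA : Basis (Fin a) ℝ A) (bC : Basis (Fin c) ℝ C)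
    (bA' : Basis (Fin a) ℝ A') (bC' : Basis (Fin c) ℝ C')
    (f : A →ₗ[ℝ] A') (g : C →ₗ[ℝ] C') :
    (LinearMap.toMatrix (bSum h bA bC) (bSum h bA' bC') (f.prodMap g)).det
      = (LinearMap.toMatrix bA bA' f).det * (LinearMap.toMatrix bC bC' g).det := by
  rw [_root_.toMatrix_prodMap, Matrix.det_reindex_self, Matrix.det_fromBlocks_zero₂₁]

/-- the key composition lemma -/
lemma det_comp_prodMap {a b c : ℕ} (h : b = a + c)
    (bV : Basis (Fin b) ℝ V)
    (bA : Basis (Fin a) ℝ A) (bC : Basis (Fin c) ℝ C)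
    (bA' : Basis (Fin a) ℝ A') (bC' : Basis (Fin c) ℝ C')
    (F : A' × C' →ₗ[ℝ] V) (f : A →ₗ[ℝ] A') (g : C →ₗ[ℝ] C') :
    (LinearMap.toMatrix (bSum h bA bC) bV (F ∘ₗ (f.prodMap g))).det
      = (LinearMap.toMatrix (bSum h bA' bC') bV F).det
        * ((LinearMap.toMatrix bA bA' f).det * (LinearMap.toMatrix bC bC' g).det) := by
  rw [LinearMap.toMatrix_comp _ (bSum h bA' bC'), Matrix.det_mul, det_toMatrix_prodMap]

/-- determinant of a shear `(a,c) ↦ (a + δ c, c)` is 1 -/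
lemma det_shear {a b c : ℕ} (h : b = a + c)
    (bA : Basis (Fin a) ℝ A) (bC : Basis (Fin c) ℝ C) (δ : C →ₗ[ℝ] A) :
    (LinearMap.toMatrix (bSum h bA bC) (bSum h bA bC)
      ((LinearMap.fst ℝ A C + δ ∘ₗ LinearMap.snd ℝ A C).prod (LinearMap.snd ℝ A C))).det = 1 := by
  have : LinearMap.toMatrix (bSum h bA bC) (bSum h bA bC)
      ((LinearMap.fst ℝ A C + δ ∘ₗ LinearMap.snd ℝ A C).prod (LinearMap.snd ℝ A C))
      = Matrix.reindex (eFin h) (eFin h)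
          (Matrix.fromBlocks 1 (LinearMap.toMatrix bC bA δ) 0 1) := by
    ext i j
    obtain ⟨s, rfl⟩ : ∃ s, eFin h s = i := ⟨(eFin h).symm i, Equiv.apply_symm_apply _ _⟩
    obtain ⟨t, rfl⟩ : ∃ t, eFin h t = j := ⟨(eFin h).symm j, Equiv.apply_symm_apply _ _⟩
    rw [LinearMap.toMatrix_apply, bSum_apply, bSum_repr]
    simp only [Matrix.reindex_apply, Equiv.symm_apply_apply, Matrix.submatrix_apply]
    cases t with
    | inl k =>
      cases s with
      | inl k' => simp [Matrix.one_apply, Finsupp.single_apply, eq_comm]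
      | inr k' => simp
    | inr k =>
      cases s with
      | inl k' => simp [LinearMap.toMatrix_apply]
      | inr k' => simp [Matrix.one_apply, Finsupp.single_apply, eq_comm]
  rw [this, Matrix.det_reindex_self, Matrix.det_fromBlocks_zero₂₁]
  simp

/-- ν is independent of the choice of section -/
lemma nu_indep {a b c : ℕ} (h : b = a + c)
    (bB : Basis (Fin b) ℝ B) (bA : Basis (Fin a) ℝ A) (bC : Basis (Fin c) ℝ C)
    (φ : A →ₗ[ℝ] B) (ψ : B →ₗ[ℝ] C) (hφ : Function.Injective φ)
    (hex : LinearMap.range φ = LinearMap.ker ψ)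
    (γ γ' : C →ₗ[ℝ] B) (hγ : ψ ∘ₗ γ = LinearMap.id) (hγ' : ψ ∘ₗ γ' = LinearMap.id) :
    nuSES h bB bA bC φ γ = nuSES h bB bA bC φ γ' := by
  have hmem : ∀ x, (γ' - γ) x ∈ LinearMap.range φ := by
    intro x
    rw [hex, LinearMap.mem_ker]
    have h1 : ψ (γ x) = x := congrFun (congrArg (↑·) hγ) x
    have h2 : ψ (γ' x) = x := congrFun (congrArg (↑·) hγ') x
    simp [h1, h2]
  set δ : C →ₗ[ℝ] A := LinearMap.codRestrictOfInjective (γ' - γ) φ hφ hmem with hδ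
  have hφδ : ∀ x, φ (δ x) = γ' x - γ x := by
    intro x
    rw [hδ, LinearMap.codRestrictOfInjective_comp_apply]
    simp
  have hcomp : φ.coprod γ' = (φ.coprod γ) ∘ₗ
      ((LinearMap.fst ℝ A C + δ ∘ₗ LinearMap.snd ℝ A C).prod (LinearMap.snd ℝ A C)) := by
    ext x
    · simp
    · simp [hφδ]
  rw [nu_eq, nu_eq, hcomp, LinearMap.toMatrix_comp _ (bSum h bA bC), Matrix.det_mul,
    det_shear, mul_one]

lemma coprod_bij (φ : A →ₗ[ℝ] B) (ψ : B →ₗ[ℝ] C) (γ : C →ₗ[ℝ] B)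
    (hφ : Function.Injective φ) (hex : LinearMap.range φ = LinearMap.ker ψ)
    (hγ : ψ ∘ₗ γ = LinearMap.id) : Function.Bijective (φ.coprod γ) := by
  have hψγ : ∀ x, ψ (γ x) = x := fun x => congrFun (congrArg (↑·) hγ) x
  have hψφ : ∀ x, ψ (φ x) = 0 := by
    intro x
    have : φ x ∈ LinearMap.ker ψ := hex ▸ LinearMap.mem_range_self φ x
    exact this
  constructor
  · intro ⟨x, y⟩ ⟨x', y'⟩ hxy
    simp only [LinearMap.coprod_apply] at hxy
    have h1 : y = y' := by
      have := congrArg ψ hxy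
      simpa [hψγ, hψφ] using this
    subst h1
    have : φ x = φ x' := by
      have := add_right_cancel hxy
      exact this
    exact Prod.ext (hφ this) rfl
  · intro v
    have : v - γ (ψ v) ∈ LinearMap.range φ := by
      rw [hex, LinearMap.mem_ker]
      simp [hψγ]
    obtain ⟨x, hx⟩ := this
    exact ⟨(x, ψ v), by simp [hx]⟩

lemma nu_ne_zero {a b c : ℕ} (h : b = a + c)
    (bB : Basis (Fin b) ℝ B) (bA : Basis (Fin a) ℝ A) (bC : Basis (Fin c) ℝ C)
    (φ : A →ₗ[ℝ] B) (ψ : B →ₗ[ℝ] C) (hφ : Function.Injective φ)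
    (hex : LinearMap.range φ = LinearMap.ker ψ)
    (γ : C →ₗ[ℝ] B) (hγ : ψ ∘ₗ γ = LinearMap.id) :
    nuSES h bB bA bC φ γ ≠ 0 := by
  rw [nu_eq, abs_ne_zero]
  set E := LinearEquiv.ofBijective (φ.coprod γ) (coprod_bij φ ψ γ hφ hex hγ)
  have hE : (φ.coprod γ) = E.toLinearMap := rfl
  intro h0
  have h1 : LinearMap.toMatrix (bSum h bA bC) bB E.toLinearMap
      * LinearMap.toMatrix bB (bSum h bA bC) E.symm.toLinearMap
      = (1 : Matrix (Fin b) (Fin b) ℝ) := by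
    rw [← LinearMap.toMatrix_comp bB (bSum h bA bC) bB]
    have : E.toLinearMap ∘ₗ E.symm.toLinearMap = LinearMap.id := by
      ext x; simp
    rw [this, LinearMap.toMatrix_id]
  have := congrArg Matrix.det h1
  rw [Matrix.det_mul, hE] at *
  rw [h0, zero_mul] at this
  simp at this

lemma abs_det_perm {n : ℕ} (bV : Basis (Fin n) ℝ V) (w : Fin n → V) (σ : Equiv.Perm (Fin n)) :
    |bV.det (w ∘ σ)| = |bV.det w| := by
  rw [show bV.det (w ∘ σ) = Basis.det bV (w ∘ σ) from rfl, AlternatingMap.map_perm]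
  rcases Int.units_eq_one_or (Equiv.Perm.sign σ) with hs | hs <;> rw [hs] <;>
    simp [Units.smul_def, abs_neg]

lemma det_toMatrix_eq {n : ℕ} {W : Type} [AddCommGroup W] [Module ℝ W]
    (b : Basis (Fin n) ℝ W) (bV : Basis (Fin n) ℝ V) (f : W →ₗ[ℝ] V) :
    (LinearMap.toMatrix b bV f).det = bV.det (fun i => f (b i)) := by
  rw [Basis.det_apply]
  congr 1
  ext i j
  rw [Basis.toMatrix_apply, LinearMap.toMatrix_apply]

/-- **Lemma `det_3x3`.**  Given a commutative 3×3 diagram of finite-dimensional real vector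
spaces with exact rows `(E_A), (E_B), (E_C)` and exact columns `(E₁), (E₂), (E₃)`, and chosen
ordered bases for all nine spaces, one has
`ν(E₂) / (ν(E₁)⬝ν(E₃)) = ν(E_B) / (ν(E_A)⬝ν(E_C))`, where each `ν` is computed via any linear
section of the corresponding surjection. -/
theorem stmt_8 (A₁ A₂ A₃ B₁ B₂ B₃ C₁ C₂ C₃ : Type)
    [AddCommGroup A₁] [Module ℝ A₁] [AddCommGroup A₂] [Module ℝ A₂]
    [AddCommGroup A₃] [Module ℝ A₃] [AddCommGroup B₁] [Module ℝ B₁]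
    [AddCommGroup B₂] [Module ℝ B₂] [AddCommGroup B₃] [Module ℝ B₃]
    [AddCommGroup C₁] [Module ℝ C₁] [AddCommGroup C₂] [Module ℝ C₂]
    [AddCommGroup C₃] [Module ℝ C₃]
    -- rows
    (φA : A₁ →ₗ[ℝ] A₂) (ψA : A₂ →ₗ[ℝ] A₃)
    (φB : B₁ →ₗ[ℝ] B₂) (ψB : B₂ →ₗ[ℝ] B₃)
    (φC : C₁ →ₗ[ℝ] C₂) (ψC : C₂ →ₗ[ℝ] C₃)
    -- columns
    (θ₁ : A₁ →ₗ[ℝ] B₁) (τ₁ : B₁ →ₗ[ℝ] C₁)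
    (θ₂ : A₂ →ₗ[ℝ] B₂) (τ₂ : B₂ →ₗ[ℝ] C₂)
    (θ₃ : A₃ →ₗ[ℝ] B₃) (τ₃ : B₃ →ₗ[ℝ] C₃)
    -- exactness of the rows
    (hφA : Function.Injective φA) (hψA : Function.Surjective ψA)
    (hexA : LinearMap.range φA = LinearMap.ker ψA)
    (hφB : Function.Injective φB) (hψB : Function.Surjective ψB)
    (hexB : LinearMap.range φB = LinearMap.ker ψB)
    (hφC : Function.Injective φC) (hψC : Function.Surjective ψC)
    (hexC : LinearMap.range φC = LinearMap.ker ψC)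
    -- exactness of the columns
    (hθ₁ : Function.Injective θ₁) (hτ₁ : Function.Surjective τ₁)
    (hex₁ : LinearMap.range θ₁ = LinearMap.ker τ₁)
    (hθ₂ : Function.Injective θ₂) (hτ₂ : Function.Surjective τ₂)
    (hex₂ : LinearMap.range θ₂ = LinearMap.ker τ₂)
    (hθ₃ : Function.Injective θ₃) (hτ₃ : Function.Surjective τ₃)
    (hex₃ : LinearMap.range θ₃ = LinearMap.ker τ₃)
    -- commutativity of the diagram
    (hcomm₁ : θ₂.comp φA = φB.comp θ₁) (hcomm₂ : θ₃.comp ψA = ψB.comp θ₂)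
    (hcomm₃ : τ₂.comp φB = φC.comp τ₁) (hcomm₄ : τ₃.comp ψB = ψC.comp τ₂)
    -- bases
    (a₁ a₂ a₃ b₁ b₂ b₃ c₁ c₂ c₃ : ℕ)
    (ha : a₂ = a₁ + a₃) (hb : b₂ = b₁ + b₃) (hc : c₂ = c₁ + c₃)
    (h₁ : b₁ = a₁ + c₁) (h₂ : b₂ = a₂ + c₂) (h₃ : b₃ = a₃ + c₃)
    (bA₁ : Module.Basis (Fin a₁) ℝ A₁) (bA₂ : Module.Basis (Fin a₂) ℝ A₂) (bA₃ : Module.Basis (Fin a₃) ℝ A₃)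
    (bB₁ : Module.Basis (Fin b₁) ℝ B₁) (bB₂ : Module.Basis (Fin b₂) ℝ B₂) (bB₃ : Module.Basis (Fin b₃) ℝ B₃)
    (bC₁ : Module.Basis (Fin c₁) ℝ C₁) (bC₂ : Module.Basis (Fin c₂) ℝ C₂) (bC₃ : Module.Basis (Fin c₃) ℝ C₃)
    -- sections
    (γA : A₃ →ₗ[ℝ] A₂) (hγA : ψA.comp γA = LinearMap.id)
    (γB : B₃ →ₗ[ℝ] B₂) (hγB : ψB.comp γB = LinearMap.id)
    (γC : C₃ →ₗ[ℝ] C₂) (hγC : ψC.comp γC = LinearMap.id)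
    (γ₁ : C₁ →ₗ[ℝ] B₁) (hγ₁ : τ₁.comp γ₁ = LinearMap.id)
    (γ₂ : C₂ →ₗ[ℝ] B₂) (hγ₂ : τ₂.comp γ₂ = LinearMap.id)
    (γ₃ : C₃ →ₗ[ℝ] B₃) (hγ₃ : τ₃.comp γ₃ = LinearMap.id) :
    nuSES h₂ bB₂ bA₂ bC₂ θ₂ γ₂ / (nuSES h₁ bB₁ bA₁ bC₁ θ₁ γ₁ * nuSES h₃ bB₃ bA₃ bC₃ θ₃ γ₃) =
      nuSES hb bB₂ bB₁ bB₃ φB γB /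
        (nuSES ha bA₂ bA₁ bA₃ φA γA * nuSES hc bC₂ bC₁ bC₃ φC γC) := by
  classical
  -- pointwise versions of hypotheses
  have fγA : ∀ x, ψA (γA x) = x := fun x => LinearMap.ext_iff.mp hγA x
  have fγB : ∀ x, ψB (γB x) = x := fun x => LinearMap.ext_iff.mp hγB x
  have fγ₁ : ∀ x, τ₁ (γ₁ x) = x := fun x => LinearMap.ext_iff.mp hγ₁ x
  have fγ₃ : ∀ x, τ₃ (γ₃ x) = x := fun x => LinearMap.ext_iff.mp hγ₃ x
  have fc₁ : ∀ x, θ₂ (φA x) = φB (θ₁ x) := fun x => LinearMap.ext_iff.mp hcomm₁ x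
  have fc₂ : ∀ x, θ₃ (ψA x) = ψB (θ₂ x) := fun x => LinearMap.ext_iff.mp hcomm₂ x
  have fc₃ : ∀ x, τ₂ (φB x) = φC (τ₁ x) := fun x => LinearMap.ext_iff.mp hcomm₃ x
  have fc₄ : ∀ x, τ₃ (ψB x) = ψC (τ₂ x) := fun x => LinearMap.ext_iff.mp hcomm₄ x
  have fψCφC : ∀ x, ψC (φC x) = 0 := fun x =>
    (LinearMap.mem_ker).mp (hexC ▸ LinearMap.mem_range_self φC x)
  -- construction of compatible sections
  set u : C₃ →ₗ[ℝ] B₂ := γB ∘ₗ γ₃ with hu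
  set γC' : C₃ →ₗ[ℝ] C₂ := τ₂ ∘ₗ u with huγC'
  have fγC' : ∀ x, ψC (γC' x) = x := by
    intro x
    simp only [γC', u, LinearMap.comp_apply]
    rw [← fc₄, fγB, fγ₃]
  have hγC'sec : ψC ∘ₗ γC' = LinearMap.id := LinearMap.ext fun x => fγC' x
  -- the retraction r
  have hrmem : ∀ x, ((LinearMap.id : C₂ →ₗ[ℝ] C₂) - γC' ∘ₗ ψC) x ∈ LinearMap.range φC := by
    intro x
    rw [hexC, LinearMap.mem_ker]
    simp [fγC']
  set r : C₂ →ₗ[ℝ] C₁ :=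
    LinearMap.codRestrictOfInjective ((LinearMap.id : C₂ →ₗ[ℝ] C₂) - γC' ∘ₗ ψC) φC hφC hrmem with hr
  have fr : ∀ x, φC (r x) = x - γC' (ψC x) := by
    intro x
    rw [hr, LinearMap.codRestrictOfInjective_comp_apply]
    simp
  have frφC : ∀ x, r (φC x) = x := by
    intro x
    apply hφC
    rw [fr, fψCφC, map_zero, sub_zero]
  have frγC' : ∀ x, r (γC' x) = 0 := by
    intro x
    apply hφC
    rw [fr, fγC', map_zero, sub_self]
  -- γ₂'
  set γ₂' : C₂ →ₗ[ℝ] B₂ := φB ∘ₗ (γ₁ ∘ₗ r) + u ∘ₗ ψC with hγ₂'def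
  have fγ₂'sec : ∀ x, τ₂ (γ₂' x) = x := by
    intro x
    simp only [γ₂', LinearMap.add_apply, LinearMap.comp_apply, map_add]
    rw [fc₃, fγ₁, show τ₂ (u (ψC x)) = γC' (ψC x) from rfl, fr]
    abel
  have hγ₂'sec : τ₂ ∘ₗ γ₂' = LinearMap.id := LinearMap.ext fun x => fγ₂'sec x
  have fγ₂'φC : ∀ x, γ₂' (φC x) = φB (γ₁ x) := by
    intro x
    simp only [γ₂', LinearMap.add_apply, LinearMap.comp_apply]
    rw [frφC, fψCφC, map_zero, add_zero]
  have fγ₂'γC' : ∀ x, γ₂' (γC' x) = u x := by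
    intro x
    simp only [γ₂', LinearMap.add_apply, LinearMap.comp_apply]
    rw [frγC', fγC', map_zero, map_zero, zero_add]
  -- γB'
  set e₃ : (A₃ × C₃) ≃ₗ[ℝ] B₃ :=
    LinearEquiv.ofBijective (θ₃.coprod γ₃) (coprod_bij θ₃ τ₃ γ₃ hθ₃ hex₃ hγ₃) with he₃
  have fe₃ : ∀ x, e₃ x = (θ₃.coprod γ₃) x := fun x => rfl
  set γB' : B₃ →ₗ[ℝ] B₂ := ((θ₂ ∘ₗ γA).coprod u) ∘ₗ e₃.symm.toLinearMap with hγB'def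
  have fγB'e₃ : ∀ p : A₃ × C₃, γB' (e₃ p) = θ₂ (γA p.1) + u p.2 := by
    intro p
    simp only [γB', LinearMap.comp_apply, LinearEquiv.coe_coe, LinearEquiv.symm_apply_apply]
    rfl
  have fγB'θ₃ : ∀ x, γB' (θ₃ x) = θ₂ (γA x) := by
    intro x
    have : θ₃ x = e₃ (x, 0) := by rw [fe₃]; simp
    rw [this, fγB'e₃]
    simp
  have fγB'γ₃ : ∀ x, γB' (γ₃ x) = u x := by
    intro x
    have : γ₃ x = e₃ (0, x) := by rw [fe₃]; simp
    rw [this, fγB'e₃]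
    simp
  have fγB'sec : ∀ x, ψB (γB' x) = x := by
    intro x
    obtain ⟨p, rfl⟩ := e₃.surjective x
    rw [fγB'e₃, fe₃]
    simp only [map_add, LinearMap.coprod_apply]
    rw [← fc₂, fγA, show ψB (u p.2) = γ₃ p.2 from by simp [u, fγB]]
  have hγB'sec : ψB ∘ₗ γB' = LinearMap.id := LinearMap.ext fun x => fγB'sec x
    -- determinant part
  have hFF' : ∀ x, ((θ₂.coprod γ₂') ∘ₗ ((φA.coprod γA).prodMap (φC.coprod γC'))) x
      = ((φB.coprod γB') ∘ₗ ((θ₁.coprod γ₁).prodMap (θ₃.coprod γ₃)))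
          ((LinearEquiv.prodProdProdComm ℝ A₁ A₃ C₁ C₃) x) := by
    rintro ⟨⟨x₁, x₃⟩, ⟨y₁, y₃⟩⟩
    simp only [LinearMap.comp_apply, LinearMap.prodMap_apply, Prod.map_apply,
      LinearMap.coprod_apply, LinearEquiv.prodProdProdComm_apply, map_add]
    rw [fγ₂'φC, fγ₂'γC', fγB'θ₃, fγB'γ₃, fc₁]
    abel
  -- permutation
  have hPQ : ∀ x : (Fin a₁ ⊕ Fin a₃) ⊕ (Fin c₁ ⊕ Fin c₃),
      (LinearEquiv.prodProdProdComm ℝ A₁ A₃ C₁ C₃)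
        ((bSum h₂ (bSum ha bA₁ bA₃) (bSum hc bC₁ bC₃))
          (((Equiv.sumCongr (eFin ha) (eFin hc)).trans (eFin h₂)) x))
      = (bSum hb (bSum h₁ bA₁ bC₁) (bSum h₃ bA₃ bC₃))
          ((((Equiv.sumCongr (eFin h₁) (eFin h₃)).trans (eFin hb)))
            ((Equiv.sumSumSumComm (Fin a₁) (Fin a₃) (Fin c₁) (Fin c₃)) x)) := by
    intro x
    rcases x with (k | k) | (k | k) <;>
      simp only [Equiv.trans_apply, Equiv.sumCongr_apply, Sum.map_inl, Sum.map_inr,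
        Equiv.sumSumSumComm_apply, Equiv.sumAssoc_apply_inl_inl,
        Equiv.sumAssoc_apply_inl_inr, Equiv.sumAssoc_apply_inr,
        Equiv.sumAssoc_symm_apply_inl, Equiv.sumAssoc_symm_apply_inr_inl,
        Equiv.sumAssoc_symm_apply_inr_inr, Equiv.sumComm_apply, Sum.swap_inl, Sum.swap_inr,
        Function.comp_apply, id_eq] <;>
      simp [bSum_apply, Prod.ext_iff]
  have E3 : |(LinearMap.toMatrix (bSum h₂ (bSum ha bA₁ bA₃) (bSum hc bC₁ bC₃)) bB₂
        ((θ₂.coprod γ₂') ∘ₗ ((φA.coprod γA).prodMap (φC.coprod γC')))).det|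
      = |(LinearMap.toMatrix (bSum hb (bSum h₁ bA₁ bC₁) (bSum h₃ bA₃ bC₃)) bB₂
        ((φB.coprod γB') ∘ₗ ((θ₁.coprod γ₁).prodMap (θ₃.coprod γ₃)))).det| := by
    rw [det_toMatrix_eq, det_toMatrix_eq]
    have hfam : (fun i => ((θ₂.coprod γ₂') ∘ₗ ((φA.coprod γA).prodMap (φC.coprod γC')))
        ((bSum h₂ (bSum ha bA₁ bA₃) (bSum hc bC₁ bC₃)) i))
      = (fun i => ((φB.coprod γB') ∘ₗ ((θ₁.coprod γ₁).prodMap (θ₃.coprod γ₃)))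
          ((bSum hb (bSum h₁ bA₁ bC₁) (bSum h₃ bA₃ bC₃)) i)) ∘
        ((((Equiv.sumCongr (eFin ha) (eFin hc)).trans (eFin h₂)).symm.trans
            ((Equiv.sumSumSumComm (Fin a₁) (Fin a₃) (Fin c₁) (Fin c₃)).trans
              ((Equiv.sumCongr (eFin h₁) (eFin h₃)).trans (eFin hb))))) := by
      funext i
      have h5 := hPQ ((((Equiv.sumCongr (eFin ha) (eFin hc)).trans (eFin h₂))).symm i)
      rw [Equiv.apply_symm_apply] at h5
      rw [hFF']
      exact congrArg _ h5
    rw [hfam]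
    exact abs_det_perm bB₂ _ _
  have E1 : nuSES h₂ bB₂ bA₂ bC₂ θ₂ γ₂' *
      (nuSES ha bA₂ bA₁ bA₃ φA γA * nuSES hc bC₂ bC₁ bC₃ φC γC') =
      |(LinearMap.toMatrix (bSum h₂ (bSum ha bA₁ bA₃) (bSum hc bC₁ bC₃)) bB₂
        ((θ₂.coprod γ₂') ∘ₗ ((φA.coprod γA).prodMap (φC.coprod γC')))).det| := by
    rw [det_comp_prodMap h₂ bB₂ (bSum ha bA₁ bA₃) (bSum hc bC₁ bC₃) bA₂ bC₂
      (θ₂.coprod γ₂') (φA.coprod γA) (φC.coprod γC'), abs_mul, abs_mul,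
      nu_eq, nu_eq, nu_eq]
  have E2 : nuSES hb bB₂ bB₁ bB₃ φB γB' *
      (nuSES h₁ bB₁ bA₁ bC₁ θ₁ γ₁ * nuSES h₃ bB₃ bA₃ bC₃ θ₃ γ₃) =
      |(LinearMap.toMatrix (bSum hb (bSum h₁ bA₁ bC₁) (bSum h₃ bA₃ bC₃)) bB₂
        ((φB.coprod γB') ∘ₗ ((θ₁.coprod γ₁).prodMap (θ₃.coprod γ₃)))).det| := by
    rw [det_comp_prodMap hb bB₂ (bSum h₁ bA₁ bC₁) (bSum h₃ bA₃ bC₃) bB₁ bB₃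
      (φB.coprod γB') (θ₁.coprod γ₁) (θ₃.coprod γ₃), abs_mul, abs_mul,
      nu_eq, nu_eq, nu_eq]
  -- replace sections
  have R2 : nuSES h₂ bB₂ bA₂ bC₂ θ₂ γ₂ = nuSES h₂ bB₂ bA₂ bC₂ θ₂ γ₂' :=
    nu_indep h₂ bB₂ bA₂ bC₂ θ₂ τ₂ hθ₂ hex₂ γ₂ γ₂' hγ₂ hγ₂'sec
  have RC : nuSES hc bC₂ bC₁ bC₃ φC γC = nuSES hc bC₂ bC₁ bC₃ φC γC' :=
    nu_indep hc bC₂ bC₁ bC₃ φC ψC hφC hexC γC γC' hγC hγC'sec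
  have RB : nuSES hb bB₂ bB₁ bB₃ φB γB = nuSES hb bB₂ bB₁ bB₃ φB γB' :=
    nu_indep hb bB₂ bB₁ bB₃ φB ψB hφB hexB γB γB' hγB hγB'sec
  -- nonvanishing
  have n1 : nuSES h₁ bB₁ bA₁ bC₁ θ₁ γ₁ ≠ 0 := nu_ne_zero h₁ bB₁ bA₁ bC₁ θ₁ τ₁ hθ₁ hex₁ γ₁ hγ₁
  have n3 : nuSES h₃ bB₃ bA₃ bC₃ θ₃ γ₃ ≠ 0 := nu_ne_zero h₃ bB₃ bA₃ bC₃ θ₃ τ₃ hθ₃ hex₃ γ₃ hγ₃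
  have nA : nuSES ha bA₂ bA₁ bA₃ φA γA ≠ 0 := nu_ne_zero ha bA₂ bA₁ bA₃ φA ψA hφA hexA γA hγA
  have nC : nuSES hc bC₂ bC₁ bC₃ φC γC ≠ 0 := nu_ne_zero hc bC₂ bC₁ bC₃ φC ψC hφC hexC γC hγC
  rw [div_eq_div_iff (mul_ne_zero n1 n3) (mul_ne_zero nA nC), R2, RC, RB]
  rw [E1, E3, ← E2]
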